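/- (i) If (Q,N) is a classical solution of the Q-system on [0,τ), then setting Ñ := 1/N, the pair (Q,Ñ) is a classical solution of the relaxed system on [0,τ). (ii) Conversely, if (Q,Ñ) is a classical solution of the relaxed system on [0,τ), the initial datum Q_init is nondecreasing on [0,1], and there exists 0 < τ* ≤ τ such that Ñ(s) > 0 for all s ∈ [0,τ*), then setting N := 1/Ñ, the pair (Q,N) is a classical solution of the Q-system on [0,τ*). -/

import Mathlib

open Real Set MeasureTheory Filter Topology
open scoped ENNReal

noncomputable section

/-- The time interval `[0, T)` in `ℝ`, where `T : ℝ≥0∞` may be `∞`. -/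
def Ico0 (T : ℝ≥0∞) : Set ℝ := {τ : ℝ | 0 ≤ τ ∧ ENNReal.ofReal τ < T}

/-- Partial derivative in the time variable (one-sided at `τ = 0`). -/
def pdTau (Q : ℝ → ℝ → ℝ) (τ η : ℝ) : ℝ := derivWithin (fun s => Q s η) (Ici 0) τ

/-- Partial derivative in the spatial variable (one-sided at `η = 0` and `η = 1`). -/
def pdEta (Q : ℝ → ℝ → ℝ) (τ η : ℝ) : ℝ := derivWithin (fun x => Q τ x) (Icc 0 1) η

/-- Assumption 1.1: `K ∈ C²(ℝ)` with `K'`, `K''` bounded on `ℝ` and `K > 0` on `[0, Φ_F]`. -/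
structure KAssump (K : ℝ → ℝ) (ΦF : ℝ) : Prop where
  smooth : ContDiff ℝ 2 K
  bdd1 : ∃ C : ℝ, ∀ x : ℝ, |deriv K x| ≤ C
  bdd2 : ∃ C : ℝ, ∀ x : ℝ, |deriv (deriv K) x| ≤ C
  pos : ∀ φ ∈ Icc (0 : ℝ) ΦF, 0 < K φ

/-- `k_min := K'(0) + ∫₀^{Φ_F} min(K''(φ), 0) dφ`. -/
def kmin (K : ℝ → ℝ) (ΦF : ℝ) : ℝ :=
  deriv K 0 + ∫ φ in (0 : ℝ)..ΦF, min (deriv (deriv K) φ) 0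

/-- `k_max := K'(0) + ∫₀^{Φ_F} max(K''(φ), 0) dφ`. -/
def kmax (K : ℝ → ℝ) (ΦF : ℝ) : ℝ :=
  deriv K 0 + ∫ φ in (0 : ℝ)..ΦF, max (deriv (deriv K) φ) 0

/-- Assumption (A2) on the initial datum. -/
structure A2 (K : ℝ → ℝ) (ΦF : ℝ) (Qinit : ℝ → ℝ) : Prop where
  reg : ContDiffOn ℝ 1 Qinit (Icc 0 1)
  mono : MonotoneOn Qinit (Icc 0 1)
  init0 : Qinit 0 = 0
  init1 : Qinit 1 = ΦF
  deriv1 : K ΦF < derivWithin Qinit (Icc 0 1) 1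
  compat : derivWithin Qinit (Icc 0 1) 1 - derivWithin Qinit (Icc 0 1) 0 = K ΦF - K 0

/-- A classical solution `(Q, N)` of the Q-system on `[0, T)` with initial datum `Qinit`. -/
structure IsQSol (K : ℝ → ℝ) (ΦF : ℝ) (T : ℝ≥0∞) (Qinit : ℝ → ℝ)
    (Q : ℝ → ℝ → ℝ) (N : ℝ → ℝ) : Prop where
  initReg : ContDiffOn ℝ 1 Qinit (Icc 0 1)
  initMono : MonotoneOn Qinit (Icc 0 1)
  init0 : Qinit 0 = 0
  init1 : Qinit 1 = ΦF
  initDeriv : K ΦF < derivWithin Qinit (Icc 0 1) 1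
  reg : ContDiffOn ℝ 1 (Function.uncurry Q) (Ico0 T ×ˢ Icc (0 : ℝ) 1)
  mono : ∀ τ ∈ Ico0 T, MonotoneOn (Q τ) (Icc 0 1)
  Ncont : ContinuousOn N (Ico0 T)
  Npos : ∀ τ ∈ Ico0 T, 0 < N τ
  pde : ∀ τ ∈ Ico0 T, ∀ η ∈ Ioo (0 : ℝ) 1,
    pdTau Q τ η + pdEta Q τ η = 1 / N τ + K (Q τ η)
  bc : ∀ τ ∈ Ico0 T, Q τ 0 = 0
  Ndef : ∀ τ ∈ Ico0 T, 1 / N τ = pdEta Q τ 1 - K ΦF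
  init : ∀ η ∈ Icc (0 : ℝ) 1, Q 0 η = Qinit η
  constraint : ∀ τ ∈ Ico0 T, K ΦF < pdEta Q τ 1

/-- A classical solution `(Q, Ñ)` of the relaxed system on `[0, T)` with initial datum `Qinit`,
where `Ñ` is unconstrained in sign. -/
structure IsRelaxedSol (K : ℝ → ℝ) (ΦF : ℝ) (T : ℝ≥0∞) (Qinit : ℝ → ℝ)
    (Q : ℝ → ℝ → ℝ) (Ntil : ℝ → ℝ) : Prop where
  initReg : ContDiffOn ℝ 1 Qinit (Icc 0 1)
  init0 : Qinit 0 = 0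
  init1 : Qinit 1 = ΦF
  reg : ContDiffOn ℝ 1 (Function.uncurry Q) (Ico0 T ×ˢ Icc (0 : ℝ) 1)
  Ncont : ContinuousOn Ntil (Ico0 T)
  pde : ∀ τ ∈ Ico0 T, ∀ η ∈ Ioo (0 : ℝ) 1,
    pdTau Q τ η + pdEta Q τ η = Ntil τ + K (Q τ η)
  bc : ∀ τ ∈ Ico0 T, Q τ 0 = 0
  Ndef : ∀ τ ∈ Ico0 T, Ntil τ = pdEta Q τ 1 - K ΦF
  init : ∀ η ∈ Icc (0 : ℝ) 1, Q 0 η = Qinit η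

/-- A steady state `(Q*, N*)` of the Q-system. -/
def IsSteadyState (K : ℝ → ℝ) (ΦF : ℝ) (Qs : ℝ → ℝ) (Ns : ℝ) : Prop :=
  ContDiffOn ℝ 1 Qs (Icc 0 1) ∧ 0 < Ns ∧
    (∀ η ∈ Icc (0 : ℝ) 1, derivWithin Qs (Icc 0 1) η = K (Qs η) + 1 / Ns) ∧
    Qs 0 = 0 ∧ Qs 1 = ΦF

/-- `P₀ f := f - ∫₀¹ f`. -/
def P0 (f : ℝ → ℝ) (η : ℝ) : ℝ := f η - ∫ x in (0 : ℝ)..1, f x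

/-- `H_init := Q_init' - K ∘ Q_init` (derivative within `[0,1]`). -/
def Hinit (K : ℝ → ℝ) (Qinit : ℝ → ℝ) (η : ℝ) : ℝ :=
  derivWithin Qinit (Icc 0 1) η - K (Qinit η)

/-- Auxiliary: monotonicity of `Ico0`. -/
lemma Ico0_subset {a b : ℝ≥0∞} (h : a ≤ b) : Ico0 a ⊆ Ico0 b :=
  fun _ hx => ⟨hx.1, lt_of_lt_of_le hx.2 h⟩

lemma relaxed_mono {ΦF : ℝ} (hΦF : 0 < ΦF) {K : ℝ → ℝ} (hK : KAssump K ΦF)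
    {T τstar : ℝ≥0∞} {Qinit : ℝ → ℝ} {Q : ℝ → ℝ → ℝ} {Ntil : ℝ → ℝ}
    (R : IsRelaxedSol K ΦF T Qinit Q Ntil)
    (hmono : MonotoneOn Qinit (Icc 0 1))
    (hτpos : 0 < τstar) (hle : τstar ≤ T)
    (hNt : ∀ s ∈ Ico0 τstar, 0 < Ntil s) :
    ∀ τ ∈ Ico0 τstar, MonotoneOn (Q τ) (Icc 0 1) := by
  have hTpos : 0 < T := hτpos.trans_le hle
  -- unique differentiability of the domain
  have hconv : Convex ℝ (Ico0 T) := by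
    rw [convex_iff_ordConnected]
    exact ⟨fun x hx y hy z hz =>
      ⟨le_trans hx.1 hz.1, lt_of_le_of_lt (ENNReal.ofReal_le_ofReal hz.2) hy.2⟩⟩
  have hint : (interior (Ico0 T)).Nonempty := by
    obtain ⟨m, hm0, hsub⟩ : ∃ m : ℝ, 0 < m ∧ Ioo 0 m ⊆ Ico0 T := by
      rcases eq_or_ne T ∞ with rfl | hTne
      · exact ⟨1, one_pos, fun x hx => ⟨hx.1.le, by simp⟩⟩
      · refine ⟨T.toReal, ENNReal.toReal_pos (ne_of_gt hTpos) hTne, fun x hx => ⟨hx.1.le, ?_⟩⟩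
        calc ENNReal.ofReal x < ENNReal.ofReal T.toReal :=
              (ENNReal.ofReal_lt_ofReal_iff (ENNReal.toReal_pos (ne_of_gt hTpos) hTne)).mpr hx.2
          _ = T := ENNReal.ofReal_toReal hTne
    exact ⟨m / 2, isOpen_Ioo.subset_interior_iff.mpr hsub ⟨by linarith, by linarith⟩⟩
  have hudT : UniqueDiffOn ℝ (Ico0 T) := uniqueDiffOn_convex hconv hint
  have hudS : UniqueDiffOn ℝ (Ico0 T ×ˢ Icc (0:ℝ) 1) := hudT.prod (uniqueDiffOn_Icc zero_lt_one)
  have hdiff : DifferentiableOn ℝ (Function.uncurry Q) (Ico0 T ×ˢ Icc (0:ℝ) 1) :=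
    R.reg.differentiableOn one_ne_zero
  set L : ℝ × ℝ → (ℝ × ℝ →L[ℝ] ℝ) :=
    fderivWithin ℝ (Function.uncurry Q) (Ico0 T ×ˢ Icc (0:ℝ) 1) with hLdef
  have hcontF : ContinuousOn L (Ico0 T ×ˢ Icc (0:ℝ) 1) :=
    R.reg.continuousOn_fderivWithin hudS le_rfl
  have hsetEq : ∀ t ∈ Ico0 T, (Ico0 T : Set ℝ) =ᶠ[𝓝 t] Ici 0 := by
    intro t ht
    have hU : {u : ℝ | ENNReal.ofReal u < T} ∈ 𝓝 t :=
      (isOpen_Iio.preimage ENNReal.continuous_ofReal).mem_nhds ht.2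
    rw [Filter.eventuallyEq_set]
    filter_upwards [hU] with u hu
    exact ⟨fun h => h.1, fun h => ⟨h, hu⟩⟩
  -- the two partial derivatives as components of the full derivative
  have hTau : ∀ t ∈ Ico0 T, ∀ η ∈ Icc (0:ℝ) 1, pdTau Q t η = L (t, η) (1, 0) := by
    intro t ht η hη
    have hF : HasFDerivWithinAt (Function.uncurry Q) (L (t, η)) (Ico0 T ×ˢ Icc (0:ℝ) 1) (t, η) :=
      (hdiff (t, η) ⟨ht, hη⟩).hasFDerivWithinAt
    have hγ : HasDerivWithinAt (fun u : ℝ => (u, η)) ((1:ℝ), (0:ℝ)) (Ico0 T) t :=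
      ((hasDerivAt_id t).prodMk (hasDerivAt_const t η)).hasDerivWithinAt
    have hcomp := hF.comp_hasDerivWithinAt t hγ (fun u hu => Set.mk_mem_prod hu hη)
    have hcomp' : HasDerivWithinAt (fun u => Q u η) (L (t, η) (1, 0)) (Ici 0) t :=
      hcomp.congr_set (hsetEq t ht)
    exact hcomp'.derivWithin (uniqueDiffOn_Ici 0 t ht.1)
  have hEta : ∀ t ∈ Ico0 T, ∀ η ∈ Icc (0:ℝ) 1, pdEta Q t η = L (t, η) (0, 1) := by
    intro t ht η hη
    have hF : HasFDerivWithinAt (Function.uncurry Q) (L (t, η)) (Ico0 T ×ˢ Icc (0:ℝ) 1) (t, η) :=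
      (hdiff (t, η) ⟨ht, hη⟩).hasFDerivWithinAt
    have hγ : HasDerivWithinAt (fun x : ℝ => (t, x)) ((0:ℝ), (1:ℝ)) (Icc (0:ℝ) 1) η :=
      ((hasDerivAt_const η t).prodMk (hasDerivAt_id η)).hasDerivWithinAt
    have hcomp := hF.comp_hasDerivWithinAt η hγ (fun x hx => Set.mk_mem_prod ht hx)
    exact hcomp.derivWithin (uniqueDiffOn_Icc zero_lt_one η hη)
  have hsplit : ∀ p : ℝ × ℝ, L p ((1:ℝ), (1:ℝ)) = L p (1, 0) + L p (0, 1) := by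
    intro p
    rw [← ContinuousLinearMap.map_add]
    norm_num
  -- PDE extended to the closed spatial interval
  have hPDE : ∀ t ∈ Ico0 T, ∀ η ∈ Icc (0:ℝ) 1,
      pdTau Q t η + pdEta Q t η = Ntil t + K (Q t η) := by
    intro t ht η hη
    have hmapsτ : MapsTo (fun x : ℝ => (t, x)) (Icc (0:ℝ) 1) (Ico0 T ×ˢ Icc (0:ℝ) 1) :=
      fun x hx => Set.mk_mem_prod ht hx
    have hFc : ContinuousOn (fun x => L (t, x) ((1:ℝ), (1:ℝ))) (Icc (0:ℝ) 1) := by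
      have h1 : ContinuousOn (fun x : ℝ => L (t, x)) (Icc (0:ℝ) 1) :=
        hcontF.comp ((continuous_const.prodMk continuous_id).continuousOn) hmapsτ
      exact (ContinuousLinearMap.apply ℝ ℝ ((1:ℝ), (1:ℝ))).continuous.comp_continuousOn h1
    have hGc : ContinuousOn (fun x => Ntil t + K (Q t x)) (Icc (0:ℝ) 1) := by
      have hQc : ContinuousOn (fun x => Q t x) (Icc (0:ℝ) 1) :=
        R.reg.continuousOn.comp ((continuous_const.prodMk continuous_id).continuousOn) hmapsτ
      exact continuousOn_const.add (hK.smooth.continuous.comp_continuousOn hQc)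
    have hEqIoo : ∀ x ∈ Ioo (0:ℝ) 1, L (t, x) ((1:ℝ), (1:ℝ)) = Ntil t + K (Q t x) := by
      intro x hx
      have hx' : x ∈ Icc (0:ℝ) 1 := Ioo_subset_Icc_self hx
      rw [hsplit, ← hTau t ht x hx', ← hEta t ht x hx']
      exact R.pde t ht x hx
    have hEqIcc : L (t, η) ((1:ℝ), (1:ℝ)) = Ntil t + K (Q t η) := by
      by_cases hio : η ∈ Ioo (0:ℝ) 1
      · exact hEqIoo η hio
      · have hcl : η ∈ closure (Ioo (0:ℝ) 1) := by
          rw [closure_Ioo (by norm_num : (0:ℝ) ≠ 1)]; exact hη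
        haveI hne : (𝓝[Ioo (0:ℝ) 1] η).NeBot := mem_closure_iff_nhdsWithin_neBot.mp hcl
        have hle' : 𝓝[Ioo (0:ℝ) 1] η ≤ 𝓝[Icc (0:ℝ) 1] η := nhdsWithin_mono η Ioo_subset_Icc_self
        have tF : Tendsto (fun x => L (t, x) ((1:ℝ), (1:ℝ))) (𝓝[Ioo (0:ℝ) 1] η)
            (𝓝 (L (t, η) ((1:ℝ), (1:ℝ)))) := (hFc η hη).tendsto.mono_left hle'
        have tG : Tendsto (fun x => Ntil t + K (Q t x)) (𝓝[Ioo (0:ℝ) 1] η)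
            (𝓝 (Ntil t + K (Q t η))) := (hGc η hη).tendsto.mono_left hle'
        have tF' : Tendsto (fun x => L (t, x) ((1:ℝ), (1:ℝ))) (𝓝[Ioo (0:ℝ) 1] η)
            (𝓝 (Ntil t + K (Q t η))) :=
          tG.congr' (eventually_mem_nhdsWithin.mono (fun x hx => (hEqIoo x hx).symm))
        exact tendsto_nhds_unique tF tF'
    rw [hTau t ht η hη, hEta t ht η hη, ← hsplit]
    exact hEqIcc
  -- characteristics
  have hchar : ∀ a b c : ℝ, 0 ≤ a → a ≤ b → ENNReal.ofReal b < τstar → 0 ≤ a + c → b + c ≤ 1 →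
      (∀ t ∈ Icc a b, t ∈ Ico0 τstar ∧ t + c ∈ Icc (0:ℝ) 1) ∧
      ContinuousOn (fun t => Q t (t + c)) (Icc a b) ∧
      ∀ t ∈ Icc a b, HasDerivWithinAt (fun t => Q t (t + c))
        (Ntil t + K (Q t (t + c))) (Icc a b) t := by
    intro a b c ha hab hb hac hbc
    have hmem : ∀ t ∈ Icc a b, t ∈ Ico0 τstar ∧ t + c ∈ Icc (0:ℝ) 1 := by
      intro t ht
      exact ⟨⟨ha.trans ht.1, lt_of_le_of_lt (ENNReal.ofReal_le_ofReal ht.2) hb⟩,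
        ⟨by linarith [ht.1], by linarith [ht.2]⟩⟩
    have hmaps : MapsTo (fun t : ℝ => (t, t + c)) (Icc a b) (Ico0 T ×ˢ Icc (0:ℝ) 1) :=
      fun t ht => Set.mk_mem_prod (Ico0_subset hle (hmem t ht).1) (hmem t ht).2
    refine ⟨hmem, ?_, ?_⟩
    · exact R.reg.continuousOn.comp
        ((continuous_id.prodMk (continuous_id.add continuous_const)).continuousOn) hmaps
    · intro t ht
      have hp : ((t, t + c) : ℝ × ℝ) ∈ Ico0 T ×ˢ Icc (0:ℝ) 1 := hmaps ht
      have hF : HasFDerivWithinAt (Function.uncurry Q) (L (t, t + c))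
          (Ico0 T ×ˢ Icc (0:ℝ) 1) (t, t + c) := (hdiff _ hp).hasFDerivWithinAt
      have hγ : HasDerivWithinAt (fun t : ℝ => (t, t + c)) ((1:ℝ), (1:ℝ)) (Icc a b) t :=
        ((hasDerivAt_id t).prodMk ((hasDerivAt_id t).add_const c)).hasDerivWithinAt
      have hcomp := hF.comp_hasDerivWithinAt t hγ hmaps
      have hval : L (t, t + c) ((1:ℝ), (1:ℝ)) = Ntil t + K (Q t (t + c)) := by
        rw [hsplit, ← hTau t hp.1 (t + c) hp.2, ← hEta t hp.1 (t + c) hp.2]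
        exact hPDE t hp.1 (t + c) hp.2
      rw [hval] at hcomp
      exact hcomp
  -- Lipschitz bound for K
  obtain ⟨C, hC⟩ := hK.bdd1
  have hC0 : 0 ≤ C := le_trans (abs_nonneg _) (hC 0)
  have hlip : LipschitzWith C.toNNReal K := by
    apply lipschitzWith_of_nnnorm_deriv_le (hK.smooth.differentiable (by norm_num))
    intro x
    rw [← NNReal.coe_le_coe, coe_nnnorm, Real.coe_toNNReal C hC0, Real.norm_eq_abs]
    exact hC x
  have hlipv : ∀ s : ℝ, LipschitzWith C.toNNReal (fun y => Ntil s + K y) := fun s =>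
    LipschitzWith.of_dist_le_mul fun y z => by
      rw [dist_add_left]
      exact hlip.dist_le_mul y z
  -- comparison principle
  have hcmp : ∀ a b : ℝ, a ≤ b → ∀ f g : ℝ → ℝ,
      ContinuousOn f (Icc a b) → ContinuousOn g (Icc a b) →
      (∀ t ∈ Ico a b, HasDerivWithinAt f (Ntil t + K (f t)) (Ici t) t) →
      (∀ t ∈ Ico a b, HasDerivWithinAt g (Ntil t + K (g t)) (Ici t) t) →
      f a ≤ g a → f b ≤ g b := by
    intro a b hab f g hfc hgc hf' hg' hfg
    by_contra hlt
    push_neg at hlt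
    set A := {t ∈ Icc a b | f t ≤ g t} with hA
    have hAne : A.Nonempty := ⟨a, ⟨left_mem_Icc.mpr hab, hfg⟩⟩
    have hAc : IsClosed A := by
      have h1 : IsClosed (Icc a b ∩ (fun t => f t - g t) ⁻¹' Iic 0) :=
        (hfc.sub hgc).preimage_isClosed_of_isClosed isClosed_Icc isClosed_Iic
      have h2 : A = Icc a b ∩ (fun t => f t - g t) ⁻¹' Iic 0 := by
        ext t; simp [hA, sub_nonpos]
      rw [h2]; exact h1
    have hAcomp : IsCompact A := isCompact_Icc.of_isClosed_subset hAc (sep_subset _ _)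
    set r := sSup A with hr
    have hrA : r ∈ A := hAcomp.sSup_mem hAne
    have hrb : r < b := by
      rcases lt_or_eq_of_le hrA.1.2 with h | h
      · exact h
      · exact absurd (h ▸ hrA.2) (not_le.mpr hlt)
    have hIoc : ∀ t ∈ Ioc r b, g t < f t := by
      intro t ht
      by_contra hge
      push_neg at hge
      have htA : t ∈ A := ⟨⟨hrA.1.1.trans ht.1.le, ht.2⟩, hge⟩
      exact absurd (le_csSup hAcomp.bddAbove htA) (not_le.mpr ht.1)
    have hr2 : g r ≤ f r := by
      have hsub : Ioc r b ⊆ Icc a b := fun x hx => ⟨hrA.1.1.trans hx.1.le, hx.2⟩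
      have hten : Tendsto (fun t => f t - g t) (𝓝[Ioc r b] r) (𝓝 (f r - g r)) :=
        ((hfc.sub hgc) r hrA.1).tendsto.mono_left (nhdsWithin_mono r hsub)
      haveI : (𝓝[Ioc r b] r).NeBot := by
        rw [nhdsWithin_Ioc_eq_nhdsGT hrb]; infer_instance
      have hev : ∀ᶠ t in 𝓝[Ioc r b] r, 0 ≤ f t - g t :=
        eventually_mem_nhdsWithin.mono fun t ht => sub_nonneg.mpr (hIoc t ht).le
      have := ge_of_tendsto hten hev
      linarith
    have hreq : f r = g r := le_antisymm hrA.2 hr2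
    have key := ODE_solution_unique (v := fun t y => Ntil t + K y) hlipv
      (hfc.mono (Icc_subset_Icc hrA.1.1 le_rfl))
      (fun t ht => hf' t ⟨hrA.1.1.trans ht.1, ht.2⟩)
      (hgc.mono (Icc_subset_Icc hrA.1.1 le_rfl))
      (fun t ht => hg' t ⟨hrA.1.1.trans ht.1, ht.2⟩)
      hreq
    have := key (right_mem_Icc.mpr hrb.le)
    exact absurd this (by intro h; rw [h] at hlt; exact lt_irrefl _ hlt)
  -- nonnegativity of Q
  have hpos : ∀ τ ∈ Ico0 τstar, ∀ η ∈ Icc (0:ℝ) 1, 0 ≤ Q τ η := by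
    intro τ hτ η hη
    have ha0 : (0:ℝ) ≤ max 0 (τ - η) := le_max_left _ _
    have hab : max 0 (τ - η) ≤ τ := max_le hτ.1 (by linarith [hη.1])
    have hac : 0 ≤ max 0 (τ - η) + (η - τ) := by
      have := le_max_right 0 (τ - η); linarith
    have hbc : τ + (η - τ) ≤ 1 := by linarith [hη.2]
    obtain ⟨hmem, hcont, hder⟩ := hchar (max 0 (τ - η)) τ (η - τ) ha0 hab hτ.2 hac hbc
    set a := max 0 (τ - η) with hadef
    set h : ℝ → ℝ := fun t => Q t (t + (η - τ)) with hh
    have hstart : 0 ≤ h a := by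
      rcases le_or_gt (τ - η) 0 with hle0 | hgt
      · have ha' : a = 0 := max_eq_left hle0
        have h0c : η - τ ∈ Icc (0:ℝ) 1 := ⟨by linarith, by linarith [hη.2, hτ.1]⟩
        have : h a = Qinit (η - τ) := by
          rw [hh, ha']
          simp only [zero_add]
          exact R.init _ h0c
        rw [this]
        have h00 : (0:ℝ) ∈ Icc (0:ℝ) 1 := ⟨le_rfl, zero_le_one⟩
        have := hmono h00 h0c h0c.1
        rw [R.init0] at this
        exact this
      · have ha' : a = τ - η := max_eq_right hgt.le
        have hzero : a + (η - τ) = 0 := by rw [ha']; ring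
        have haT : a ∈ Ico0 T := Ico0_subset hle (hmem a (left_mem_Icc.mpr hab)).1
        show 0 ≤ Q a (a + (η - τ))
        rw [hzero, R.bc a haT]
    by_contra hneg
    push_neg at hneg
    have hτc : τ + (η - τ) = η := by ring
    have hhτ : h τ < 0 := by show Q τ (τ + (η - τ)) < 0; rw [hτc]; exact hneg
    set A := {t ∈ Icc a τ | 0 ≤ h t} with hA
    have hAne : A.Nonempty := ⟨a, ⟨left_mem_Icc.mpr hab, hstart⟩⟩
    have hAc : IsClosed A := by
      have h1 : IsClosed (Icc a τ ∩ h ⁻¹' Ici 0) :=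
        hcont.preimage_isClosed_of_isClosed isClosed_Icc isClosed_Ici
      have h2 : A = Icc a τ ∩ h ⁻¹' Ici 0 := by ext t; simp [hA]
      rw [h2]; exact h1
    have hAcomp : IsCompact A := isCompact_Icc.of_isClosed_subset hAc (sep_subset _ _)
    set r := sSup A with hrdef
    have hrA : r ∈ A := hAcomp.sSup_mem hAne
    have hrb : r < τ := by
      rcases lt_or_eq_of_le hrA.1.2 with hlt | heq
      · exact hlt
      · exact absurd (heq ▸ hrA.2) (not_le.mpr hhτ)
    have hIocneg : ∀ t ∈ Ioc r τ, h t < 0 := by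
      intro t ht
      by_contra hge
      push_neg at hge
      have htA : t ∈ A := ⟨⟨hrA.1.1.trans ht.1.le, ht.2⟩, hge⟩
      exact absurd (le_csSup hAcomp.bddAbove htA) (not_le.mpr ht.1)
    haveI : (𝓝[Ioc r τ] r).NeBot := by
      rw [nhdsWithin_Ioc_eq_nhdsGT hrb]; infer_instance
    have hr0 : h r = 0 := by
      refine le_antisymm ?_ hrA.2
      have hsub : Ioc r τ ⊆ Icc a τ := fun x hx => ⟨hrA.1.1.trans hx.1.le, hx.2⟩
      have hten : Tendsto h (𝓝[Ioc r τ] r) (𝓝 (h r)) :=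
        (hcont r hrA.1).tendsto.mono_left (nhdsWithin_mono r hsub)
      have hev : ∀ᶠ t in 𝓝[Ioc r τ] r, h t ≤ 0 :=
        eventually_mem_nhdsWithin.mono fun t ht => (hIocneg t ht).le
      exact le_of_tendsto hten hev
    have hd : HasDerivWithinAt h (Ntil r + K (h r)) (Ioc r τ) r :=
      (hder r hrA.1).mono (fun x hx => ⟨hrA.1.1.trans hx.1.le, hx.2⟩)
    rw [hasDerivWithinAt_iff_tendsto_slope] at hd
    have hset : Ioc r τ \ {r} = Ioc r τ := by
      apply diff_singleton_eq_self; simp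
    rw [hset] at hd
    have hslope : ∀ᶠ t in 𝓝[Ioc r τ] r, slope h r t ≤ 0 := by
      refine eventually_mem_nhdsWithin.mono fun t ht => ?_
      rw [slope_def_field]
      have h1 : h t < 0 := hIocneg t ht
      have h2 : 0 < t - r := sub_pos.mpr ht.1
      apply div_nonpos_of_nonpos_of_nonneg <;> [skip; linarith]
      rw [hr0]; linarith
    have hlim : Ntil r + K (h r) ≤ 0 := le_of_tendsto hd hslope
    have hKpos : 0 < K (h r) := by rw [hr0]; exact hK.pos 0 ⟨le_rfl, hΦF.le⟩
    have hNpos : 0 < Ntil r := hNt r (hmem r hrA.1).1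
    linarith
  -- conclusion: monotonicity along characteristics
  intro τ hτ η₁ hη₁ η₂ hη₂ h12
  have ha0 : (0:ℝ) ≤ max 0 (τ - η₁) := le_max_left _ _
  have hab : max 0 (τ - η₁) ≤ τ := max_le hτ.1 (by linarith [hη₁.1])
  set a := max 0 (τ - η₁) with hadef
  have haη₁ : τ - η₁ ≤ a := le_max_right _ _
  have hac1 : 0 ≤ a + (η₁ - τ) := by linarith
  have hbc1 : τ + (η₁ - τ) ≤ 1 := by linarith [hη₁.2]
  have hac2 : 0 ≤ a + (η₂ - τ) := by linarith
  have hbc2 : τ + (η₂ - τ) ≤ 1 := by linarith [hη₂.2]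
  obtain ⟨hmem1, hcont1, hder1⟩ := hchar a τ (η₁ - τ) ha0 hab hτ.2 hac1 hbc1
  obtain ⟨hmem2, hcont2, hder2⟩ := hchar a τ (η₂ - τ) ha0 hab hτ.2 hac2 hbc2
  have hinit : Q a (a + (η₁ - τ)) ≤ Q a (a + (η₂ - τ)) := by
    rcases le_or_gt (τ - η₁) 0 with hle0 | hgt
    · have ha' : a = 0 := max_eq_left hle0
      have h1c : η₁ - τ ∈ Icc (0:ℝ) 1 := ⟨by linarith, by linarith [hη₁.2, hτ.1]⟩
      have h2c : η₂ - τ ∈ Icc (0:ℝ) 1 := ⟨by linarith, by linarith [hη₂.2, hτ.1]⟩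
      rw [ha']
      simp only [zero_add]
      rw [R.init _ h1c, R.init _ h2c]
      exact hmono h1c h2c (by linarith)
    · have ha' : a = τ - η₁ := max_eq_right hgt.le
      have hzero : a + (η₁ - τ) = 0 := by rw [ha']; ring
      have haT : a ∈ Ico0 T := Ico0_subset hle (hmem1 a (left_mem_Icc.mpr hab)).1
      rw [hzero, R.bc a haT]
      exact hpos a (hmem1 a (left_mem_Icc.mpr hab)).1 _ (hmem2 a (left_mem_Icc.mpr hab)).2
  have hIci : ∀ (f : ℝ → ℝ) (d : ℝ), ∀ t ∈ Ico a τ,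
      HasDerivWithinAt f d (Icc a τ) t → HasDerivWithinAt f d (Ici t) t := by
    intro f d t ht hder
    refine hder.mono_of_mem_nhdsWithin (mem_nhdsWithin.mpr ⟨Iio τ, isOpen_Iio, ht.2, ?_⟩)
    intro x hx
    exact ⟨ht.1.trans hx.2, hx.1.le⟩
  have hfin := hcmp a τ hab _ _ hcont1 hcont2
    (fun t ht => hIci _ _ t ht (hder1 t (Ico_subset_Icc_self ht)))
    (fun t ht => hIci _ _ t ht (hder2 t (Ico_subset_Icc_self ht)))
    hinit
  rw [show τ + (η₁ - τ) = η₁ by ring, show τ + (η₂ - τ) = η₂ by ring] at hfin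
  exact hfin

/-- Lemma 3.9: the correspondence between classical solutions of the original Q-system and
of the relaxed system. -/
theorem stmt6 (ΦF : ℝ) (hΦF : 0 < ΦF) (K : ℝ → ℝ) (hK : KAssump K ΦF) :
    (∀ (T : ℝ≥0∞) (Qinit : ℝ → ℝ) (Q : ℝ → ℝ → ℝ) (N : ℝ → ℝ),
      IsQSol K ΦF T Qinit Q N →
        IsRelaxedSol K ΦF T Qinit Q (fun s => 1 / N s)) ∧
    (∀ (T τstar : ℝ≥0∞) (Qinit : ℝ → ℝ) (Q : ℝ → ℝ → ℝ) (Ntil : ℝ → ℝ),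
      IsRelaxedSol K ΦF T Qinit Q Ntil →
      MonotoneOn Qinit (Icc 0 1) →
      0 < τstar → τstar ≤ T →
      (∀ s ∈ Ico0 τstar, 0 < Ntil s) →
      IsQSol K ΦF τstar Qinit Q (fun s => 1 / Ntil s)) := by
  obtain ⟨C, hC⟩ := hK.bdd1
  constructor
  · intro T Qinit Q N hQ
    exact ⟨hQ.initReg, hQ.init0, hQ.init1, hQ.reg,
      ContinuousOn.div continuousOn_const hQ.Ncont (fun τ hτ => (hQ.Npos τ hτ).ne'),
      hQ.pde, hQ.bc, hQ.Ndef, hQ.init⟩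
  · intro T τstar Qinit Q Ntil R hmono hτpos hle hNt
    have hsub : Ico0 τstar ⊆ Ico0 T := Ico0_subset hle
    have h0T : (0:ℝ) ∈ Ico0 T := ⟨le_rfl, by simpa using (hτpos.trans_le hle)⟩
    have h0s : (0:ℝ) ∈ Ico0 τstar := ⟨le_rfl, by simpa using hτpos⟩
    refine ⟨R.initReg, hmono, R.init0, R.init1, ?_,
      R.reg.mono (Set.prod_mono hsub subset_rfl),
      relaxed_mono hΦF hK R hmono hτpos hle hNt,
      ContinuousOn.div continuousOn_const (R.Ncont.mono hsub) (fun s hs => (hNt s hs).ne'),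
      fun s hs => one_div_pos.mpr (hNt s hs), ?_, fun τ hτ => R.bc τ (hsub hτ),
      ?_, R.init, ?_⟩
    · have hN0 := hNt 0 h0s
      have hNd := R.Ndef 0 h0T
      have hEq : pdEta Q 0 1 = derivWithin Qinit (Icc 0 1) 1 :=
        derivWithin_congr (fun x hx => R.init x hx) (R.init 1 ⟨zero_le_one, le_rfl⟩)
      rw [hEq] at hNd
      linarith
    · intro τ hτ η hη
      have := R.pde τ (hsub hτ) η hη
      simp only [one_div_one_div]
      exact this
    · intro τ hτ
      simp only [one_div_one_div]
      exact R.Ndef τ (hsub hτ)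
    · intro τ hτ
      have hN := hNt τ hτ
      rw [R.Ndef τ (hsub hτ)] at hN
      linarith
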